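/- Let n > t > 1 and let λ, s_1, s_2 be positive integers with min{s_1+1, s_2+1} ≤ λ ≤ s_1 + s_2. Set χ = max{⌈t/s_1⌉, ⌈(n-t)/s_2⌉}. Then the generalized matching number satisfies m(n, t, λ; s_1+1, s_2+1) ≤ (1/n)·binom(n,t)·(λ-1)·⌈n / ⌊n/χ⌋⌉. -/

import Mathlib

namespace Stmt13

open Fin.NatCast


/-- superadditivity of nat division -/
lemma add_div_le (x y c : ℕ) (hc : 0 < c) : x / c + y / c ≤ (x + y) / c := by
  rw [Nat.le_div_iff_mul_le hc, add_mul]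
  exact Nat.add_le_add (Nat.div_mul_le_self x c) (Nat.div_mul_le_self y c)

lemma div_add_le (x y c : ℕ) (hc : 0 < c) : (x + y) / c ≤ x / c + (y + c - 1) / c := by
  rw [Nat.div_le_iff_le_mul_add_pred hc, Nat.mul_add]
  have h1 := Nat.div_add_mod x c
  have h2 := Nat.div_add_mod (y + c - 1) c
  have h3 : x % c < c := Nat.mod_lt _ hc
  have h4 : (y + c - 1) % c < c := Nat.mod_lt _ hc
  set p := c * (x / c)
  set q := c * ((y + c - 1) / c)
  omega

/-- `a ≤ b * ⌈a/b⌉` -/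
lemma le_mul_ceilDiv {a b : ℕ} (hb : 0 < b) : a ≤ b * ((a + b - 1) / b) := by
  have h := Nat.div_add_mod (a + b - 1) b
  have h2 : (a + b - 1) % b < b := Nat.mod_lt _ hb
  set p := b * ((a + b - 1) / b)
  omega

lemma ceilDiv_le_self {a b : ℕ} (ha : 0 < a) (hb : 0 < b) : (a + b - 1) / b ≤ a := by
  rw [Nat.div_le_iff_le_mul_add_pred hb]
  have : a ≤ b * a := Nat.le_mul_of_pos_left a hb
  omega

lemma one_le_ceilDiv {a b : ℕ} (ha : 0 < a) (hb : 0 < b) : 1 ≤ (a + b - 1) / b := by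
  rw [Nat.le_div_iff_mul_le hb]
  omega

def st (n c k : ℕ) : ℕ := (k * n + (c - 1)) / c
def blk (n c a : ℕ) : ℕ := a * c / n
def cls (n c a : ℕ) : ℕ := a - st n c (blk n c a)

lemma st_mono (n c : ℕ) {k1 k2 : ℕ} (h : k1 ≤ k2) : st n c k1 ≤ st n c k2 :=
  Nat.div_le_div_right (Nat.add_le_add_right (Nat.mul_le_mul_right n h) _)


lemma st_le {n c : ℕ} (hc : 0 < c) (a : ℕ) : st n c (blk n c a) ≤ a := by
  rw [st, blk, Nat.div_le_iff_le_mul_add_pred hc]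
  have h : (a * c / n) * n ≤ a * c := Nat.div_mul_le_self (a * c) n
  have e : c * a = a * c := by ring
  rw [e]
  set u := a * c / n * n
  omega

lemma lt_st {n c : ℕ} (hn : 0 < n) (hc : 0 < c) (a : ℕ) : a < st n c (blk n c a + 1) := by
  rw [st, blk, Nat.lt_iff_add_one_le, Nat.le_div_iff_mul_le hc]
  have h := Nat.div_add_mod (a * c) n
  have h2 : a * c % n < n := Nat.mod_lt _ hn
  have e1 : (a + 1) * c = a * c + c := by ring
  have e2 : (a * c / n + 1) * n = n * (a * c / n) + n := by ring
  rw [e1, e2]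
  set u := n * (a * c / n)
  omega

lemma st_add_div {n c : ℕ} (hc : 0 < c) (k : ℕ) : st n c k + n / c ≤ st n c (k + 1) := by
  have h := add_div_le (k * n + (c - 1)) n c hc
  have he : k * n + (c - 1) + n = (k + 1) * n + (c - 1) := by ring
  rw [he] at h
  exact h

lemma st_succ_le {n c : ℕ} (hc : 0 < c) (k : ℕ) :
    st n c (k + 1) ≤ st n c k + (n + c - 1) / c := by
  have h := div_add_le (k * n + (c - 1)) n c hc
  have he : k * n + (c - 1) + n = (k + 1) * n + (c - 1) := by ring
  rw [he] at h
  simp only [st]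
  exact h

lemma st_c {n c : ℕ} (hc : 0 < c) : st n c c = n := by
  rw [st, Nat.mul_add_div hc, Nat.div_eq_of_lt (by omega), add_zero]

lemma blk_lt {n c a : ℕ} (hn : 0 < n) (hc : 0 < c) (ha : a < n) : blk n c a < c := by
  rw [blk, Nat.div_lt_iff_lt_mul hn, mul_comm c n]
  exact Nat.mul_lt_mul_of_pos_right ha hc

lemma cls_lt {n c : ℕ} (hn : 0 < n) (hc : 0 < c) (a : ℕ) :
    cls n c a < (n + c - 1) / c := by
  have h1 := lt_st hn hc a
  have h2 := st_succ_le (n := n) hc (blk n c a)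
  have h3 := one_le_ceilDiv hn hc
  rw [cls]
  omega


lemma spread_core {n c χ : ℕ} (hn : 0 < n) (hc : 0 < c) (hχc : χ ≤ n / c)
    {x y : ℕ} (hy : y < n) (hxy : x < y) (hcl : cls n c x = cls n c y) :
    χ ≤ y - x ∧ y - x + χ ≤ n := by
  have hsa : st n c (blk n c x) ≤ x := st_le hc x
  have hsb : st n c (blk n c y) ≤ y := st_le hc y
  have hla : x < st n c (blk n c x + 1) := lt_st hn hc x
  have hlb : y < st n c (blk n c y + 1) := lt_st hn hc y
  have hclx : cls n c x = x - st n c (blk n c x) := rfl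
  have hcly : cls n c y = y - st n c (blk n c y) := rfl
  have hkab : blk n c x < blk n c y := by
    rcases Nat.lt_trichotomy (blk n c x) (blk n c y) with h | h | h
    · exact h
    · exfalso
      have hse : st n c (blk n c x) = st n c (blk n c y) := by rw [h]
      omega
    · exfalso
      have h6 : st n c (blk n c y + 1) ≤ st n c (blk n c x) :=
        st_mono n c (by omega : blk n c y + 1 ≤ blk n c x)
      omega
  have h1 : st n c (blk n c x) + n / c ≤ st n c (blk n c x + 1) := st_add_div hc _
  have h2 : st n c (blk n c x + 1) ≤ st n c (blk n c y) :=
    st_mono n c (by omega : blk n c x + 1 ≤ blk n c y)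
  have h3 : st n c (blk n c y) + n / c ≤ st n c (blk n c y + 1) := st_add_div hc _
  have h4 : st n c (blk n c y + 1) ≤ st n c c :=
    st_mono n c (by have := blk_lt hn hc hy; omega : blk n c y + 1 ≤ c)
  have h5 : st n c c = n := st_c hc
  omega

lemma cls_spread {n c χ a b : ℕ} (hn : 0 < n) (hc : 0 < c) (hχc : χ ≤ n / c)
    (ha : a < n) (hb : b < n) (hab : a ≠ b) (hcls : cls n c a = cls n c b) :
    (χ ≤ if a ≤ b then b - a else a - b) ∧ (if a ≤ b then b - a else a - b) + χ ≤ n := by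
  rcases Nat.lt_trichotomy a b with h | h | h
  · have := spread_core hn hc hχc hb h hcls
    simp only [if_pos (Nat.le_of_lt h)]
    exact this
  · exact absurd h hab
  · have := spread_core hn hc hχc ha h hcls.symm
    simp only [if_neg (by omega : ¬ a ≤ b)]
    exact this


def delta (n y x : ℕ) : ℕ := if x ≤ y then y - x else y + n - x

lemma delta_def (n y x : ℕ) : delta n y x = if x ≤ y then y - x else y + n - x := rfl

lemma mod2 {a n : ℕ} (hn : 0 < n) (h : a < n + n) : a % n = if a < n then a else a - n := by
  split_ifs with hc
  · exact Nat.mod_eq_of_lt hc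
  · rw [Nat.mod_eq_sub_mod (by omega)]
    exact Nat.mod_eq_of_lt (by omega)

def arc (n t : ℕ) [NeZero n] (x : Fin n) : Finset (Fin n) :=
  (Finset.range t).image (fun j : ℕ => x + (j : Fin n))

lemma mem_arc {n t : ℕ} [NeZero n] (htn : t ≤ n) (x y : Fin n) :
    y ∈ arc n t x ↔ delta n y.val x.val < t := by
  have hn : 0 < n := Nat.pos_of_ne_zero (NeZero.ne n)
  have hx := x.isLt; have hy := y.isLt
  simp only [arc, Finset.mem_image, Finset.mem_range]
  constructor
  · rintro ⟨j, hj, rfl⟩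
    have hv : ((x + (j : Fin n)).val) = (x.val + j) % n := by
      rw [Fin.val_add, Fin.val_natCast, Nat.add_mod_mod]
    rw [mod2 hn (by omega)] at hv
    rw [delta_def]
    split_ifs at hv ⊢ <;> omega
  · intro hd
    refine ⟨delta n y.val x.val, hd, ?_⟩
    apply Fin.ext
    have hdlt : delta n y.val x.val < n := by rw [delta_def]; split_ifs <;> omega
    rw [Fin.val_add, Fin.val_natCast, Nat.add_mod_mod, mod2 hn (by omega)]
    rw [delta_def] at hdlt ⊢
    split_ifs at hdlt ⊢ <;> omega

lemma arc_card {n t : ℕ} [NeZero n] (htn : t ≤ n) (x : Fin n) : (arc n t x).card = t := by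
  have hn : 0 < n := Nat.pos_of_ne_zero (NeZero.ne n)
  have hx := x.isLt
  rw [arc, Finset.card_image_of_injOn, Finset.card_range]
  intro j1 h1 j2 h2 heq
  simp only [Finset.coe_range, Set.mem_Iio] at h1 h2
  have hv := congrArg Fin.val heq
  rw [Fin.val_add, Fin.val_natCast, Nat.add_mod_mod, Fin.val_add, Fin.val_natCast,
    Nat.add_mod_mod, mod2 hn (by omega), mod2 hn (by omega)] at hv
  split_ifs at hv <;> omega

lemma delta_lt {n y x : ℕ} (hy : y < n) (hx : x < n) : delta n y x < n := by
  rw [delta_def]; split_ifs <;> omega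

lemma delta_spread {n χ y a b : ℕ} (hy : y < n) (ha : a < n) (hb : b < n) (hab : a ≠ b)
    (h1 : χ ≤ if a ≤ b then b - a else a - b)
    (h2 : (if a ≤ b then b - a else a - b) + χ ≤ n) :
    delta n y a + χ ≤ delta n y b ∨ delta n y b + χ ≤ delta n y a := by
  rw [delta_def, delta_def]
  split_ifs at h1 h2 ⊢ <;> omega

lemma card_le_of_spread {ι : Type*} [DecidableEq ι] (B : Finset ι) (f : ι → ℕ) (s χ : ℕ)
    (hχ : 0 < χ) (hlt : ∀ i ∈ B, f i < s * χ)
    (hsp : ∀ i ∈ B, ∀ j ∈ B, i ≠ j → f i + χ ≤ f j ∨ f j + χ ≤ f i) :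
    B.card ≤ s := by
  have h := Finset.card_le_card_of_injOn (f := fun i => f i / χ) (t := Finset.range s)
    (fun i hi => Finset.mem_range.2 ((Nat.div_lt_iff_lt_mul hχ).2 (hlt i hi))) ?_
  · simpa using h
  · intro i hi j hj heq
    by_contra hne
    rcases hsp i hi j hj hne with h' | h'
    · have h'' : (f i + χ) / χ ≤ f j / χ := Nat.div_le_div_right h'
      rw [Nat.add_div_right _ hχ] at h''
      simp only at heq
      omega
    · have h'' : (f j + χ) / χ ≤ f i / χ := Nat.div_le_div_right h'
      rw [Nat.add_div_right _ hχ] at h''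
      simp only at heq
      omega


lemma not_good {n t lam s1 s2 χ : ℕ} [NeZero n] (htn : t ≤ n) (hχ : 0 < χ)
    (ht1 : t ≤ s1 * χ) (ht2 : n - t ≤ s2 * χ)
    (x : Fin lam → Fin n) (hinj : Function.Injective x)
    (hsp : ∀ i j : Fin lam, i ≠ j →
      (χ ≤ if (x i).val ≤ (x j).val then (x j).val - (x i).val else (x i).val - (x j).val) ∧
      (if (x i).val ≤ (x j).val then (x j).val - (x i).val else (x i).val - (x j).val) + χ ≤ n)
    (π : Equiv.Perm (Fin n)) :
    (∀ B : Finset (Fin lam), B.card = s1 + 1 →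
      B.inf (fun i => (arc n t (x i)).image π) = ∅) ∧
    (∀ B : Finset (Fin lam), B.card = s2 + 1 →
      B.sup (fun i => (arc n t (x i)).image π) = Finset.univ) := by
  have hn : 0 < n := Nat.pos_of_ne_zero (NeZero.ne n)
  have hmem : ∀ (y : Fin n) (i : Fin lam), y ∈ (arc n t (x i)).image π ↔
      delta n (π.symm y).val (x i).val < t := by
    intro y i
    rw [← mem_arc htn]
    constructor
    · rintro h
      obtain ⟨z, hz, rfl⟩ := Finset.mem_image.1 h
      simpa using hz
    · intro h
      exact Finset.mem_image.2 ⟨π.symm y, h, by simp⟩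
  constructor
  · intro B hB
    by_contra hne
    obtain ⟨y, hy⟩ := Finset.nonempty_iff_ne_empty.2 hne
    rw [Finset.mem_inf] at hy
    have hcard : B.card ≤ s1 := by
      apply card_le_of_spread B (fun i => delta n (π.symm y).val (x i).val) s1 χ hχ
      · intro i hi
        exact lt_of_lt_of_le ((hmem y i).1 (hy i hi)) ht1
      · intro i hi j hj hij
        exact delta_spread (π.symm y).isLt (x i).isLt (x j).isLt
          (fun h => hij (hinj (Fin.ext h))) (hsp i j hij).1 (hsp i j hij).2
    omega
  · intro B hB
    apply Finset.eq_univ_iff_forall.2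
    intro y
    rw [Finset.mem_sup]
    by_contra hcon
    push_neg at hcon
    have hge : ∀ i ∈ B, t ≤ delta n (π.symm y).val (x i).val := by
      intro i hi
      by_contra h
      exact hcon i hi ((hmem y i).2 (by omega))
    have hcard : B.card ≤ s2 := by
      apply card_le_of_spread B (fun i => delta n (π.symm y).val (x i).val - t) s2 χ hχ
      · intro i hi
        have hd := delta_lt (π.symm y).isLt (x i).isLt
        have hg := hge i hi
        omega
      · intro i hi j hj hij
        have h1 := hge i hi; have h2 := hge j hj
        rcases delta_spread (π.symm y).isLt (x i).isLt (x j).isLt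
          (fun h => hij (hinj (Fin.ext h))) (hsp i j hij).1 (hsp i j hij).2 with h | h
        · left; omega
        · right; omega
    omega

/-- a permutation of `Fin n` carrying one finset to another of the same card -/
lemma exists_perm_image {n : ℕ} (S T : Finset (Fin n)) (h : S.card = T.card) :
    ∃ σ : Equiv.Perm (Fin n), S.image σ = T := by
  classical
  have e1 : {x // x ∈ S} ≃ {x // x ∈ T} :=
    Fintype.equivOfCardEq (by simpa [Fintype.card_coe] using h)
  have e2 : {x // ¬ x ∈ S} ≃ {x // ¬ x ∈ T} := by
    apply Fintype.equivOfCardEq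
    rw [Fintype.card_subtype_compl, Fintype.card_subtype_compl]
    congr 1
    · simpa [Fintype.card_coe] using h
  refine ⟨Equiv.subtypeCongr e1 e2, ?_⟩
  apply Finset.eq_of_subset_of_card_le
  · intro y hy
    obtain ⟨z, hz, rfl⟩ := Finset.mem_image.1 hy
    have : Equiv.subtypeCongr e1 e2 z = (e1 ⟨z, hz⟩ : Fin n) := by
      simp [Equiv.subtypeCongr, hz]
    rw [this]
    exact (e1 ⟨z, hz⟩).2
  · rw [Finset.card_image_of_injective _ (Equiv.injective _), h]

lemma arc_add {n t : ℕ} [NeZero n] (i : Fin n) :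
    (arc n t 0).image (fun z => z + i) = arc n t i := by
  simp only [arc, Finset.image_image]
  have : ((fun z => z + i) ∘ fun j : ℕ => (0 : Fin n) + (j : Fin n))
      = fun j : ℕ => i + (j : Fin n) := by
    funext j
    simp [add_comm]
  rw [this]

lemma fiber_count {n t : ℕ} [NeZero n] (htn : t ≤ n) (i : Fin n) (S : Finset (Fin n))
    (hS : S.card = t) :
    (Finset.univ.filter (fun π : Equiv.Perm (Fin n) => (arc n t i).image π = S)).card
    = (Finset.univ.filter
        (fun π : Equiv.Perm (Fin n) => (arc n t 0).image π = arc n t 0)).card := by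
  obtain ⟨σ, hσ⟩ := exists_perm_image (arc n t 0) S (by rw [arc_card htn, hS])
  set ρ : Equiv.Perm (Fin n) := Equiv.addRight i with hρ
  have hρarc : (arc n t 0).image ρ = arc n t i := arc_add i
  apply Finset.card_nbij' (fun π => (ρ.trans π).trans σ.symm)
    (fun π => (ρ.symm.trans π).trans σ)
  · intro π hπ
    simp only [Finset.mem_coe, Finset.mem_filter, Finset.mem_univ, true_and] at hπ ⊢
    simp only [Equiv.coe_trans, ← Finset.image_image]
    rw [hρarc, hπ, ← hσ, Finset.image_image]
    simp
  · intro π hπ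
    simp only [Finset.mem_coe, Finset.mem_filter, Finset.mem_univ, true_and] at hπ ⊢
    simp only [Equiv.coe_trans, ← Finset.image_image]
    have hρ0 : (arc n t i).image ρ.symm = arc n t 0 := by
      rw [← hρarc, Finset.image_image]; simp
    rw [hρ0, hπ, hσ]
  · intro π _
    ext z
    simp
  · intro π _
    ext z
    simp

lemma main_count {n t lam c : ℕ} [NeZero n] (htn : t ≤ n)
    (G : Finset (Finset (Fin n))) (hG1 : ∀ S ∈ G, S.card = t)
    (hcb : ∀ π : Equiv.Perm (Fin n),
      (Finset.univ.filter (fun i : Fin n => (arc n t i).image π ∈ G)).card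
        ≤ (lam - 1) * ((n + c - 1) / c)) :
    n * G.card ≤ Nat.choose n t * ((lam - 1) * ((n + c - 1) / c)) := by
  classical
  set M := (lam - 1) * ((n + c - 1) / c) with hM
  set K := (Finset.univ.filter
      (fun π : Equiv.Perm (Fin n) => (arc n t 0).image π = arc n t 0)).card with hK
  -- each i-column sums to G.card * K
  have hcol : ∀ i : Fin n,
      (Finset.univ.filter (fun π : Equiv.Perm (Fin n) => (arc n t i).image π ∈ G)).card
        = G.card * K := by
    intro i
    have hfib := Finset.card_eq_sum_card_fiberwise
      (f := fun π : Equiv.Perm (Fin n) => (arc n t i).image π)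
      (s := Finset.univ.filter (fun π : Equiv.Perm (Fin n) => (arc n t i).image π ∈ G))
      (t := G) (fun π hπ => (Finset.mem_filter.1 hπ).2)
    calc (Finset.univ.filter
        (fun π : Equiv.Perm (Fin n) => (arc n t i).image π ∈ G)).card
        = ∑ S ∈ G, ((Finset.univ.filter
            (fun π : Equiv.Perm (Fin n) => (arc n t i).image π ∈ G)).filter
              (fun π : Equiv.Perm (Fin n) => (arc n t i).image π = S)).card := hfib
      _ = ∑ _S ∈ G, K := Finset.sum_congr rfl (fun S hS => by
          rw [Finset.filter_filter]
          have he : Finset.filter (fun π : Equiv.Perm (Fin n) =>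
              ((arc n t i).image π ∈ G) ∧ (arc n t i).image π = S) Finset.univ
              = Finset.filter (fun π : Equiv.Perm (Fin n) =>
                (arc n t i).image π = S) Finset.univ := by
            apply Finset.filter_congr
            intro π _
            exact ⟨fun h => h.2, fun h => ⟨h ▸ hS, h⟩⟩
          rw [he]
          exact fiber_count htn i S (hG1 S hS))
      _ = G.card * K := by rw [Finset.sum_const, smul_eq_mul]
  -- total permutation count
  have htot : (Finset.univ : Finset (Equiv.Perm (Fin n))).card = Nat.choose n t * K := by
    have hfib := Finset.card_eq_sum_card_fiberwise
      (f := fun π : Equiv.Perm (Fin n) => (arc n t 0).image π)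
      (s := Finset.univ) (t := Finset.powersetCard t Finset.univ)
      (fun π _ => by
        rw [Finset.mem_coe, Finset.mem_powersetCard_univ, Finset.card_image_of_injective _ (Equiv.injective π),
          arc_card htn])
    rw [hfib]
    have : ∀ S ∈ Finset.powersetCard t (Finset.univ : Finset (Fin n)),
        (Finset.univ.filter (fun π : Equiv.Perm (Fin n) => (arc n t 0).image π = S)).card = K :=
      fun S hS => fiber_count htn 0 S (Finset.mem_powersetCard_univ.1 hS)
    rw [Finset.sum_congr rfl this, Finset.sum_const, smul_eq_mul,
      Finset.card_powersetCard, Finset.card_univ, Fintype.card_fin]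
  -- double counting
  have hswap : ∑ π : Equiv.Perm (Fin n),
      (Finset.univ.filter (fun i : Fin n => (arc n t i).image π ∈ G)).card
      = ∑ i : Fin n,
      (Finset.univ.filter (fun π : Equiv.Perm (Fin n) => (arc n t i).image π ∈ G)).card := by
    simp only [Finset.card_filter]
    exact Finset.sum_comm
  have hub : ∑ π : Equiv.Perm (Fin n),
      (Finset.univ.filter (fun i : Fin n => (arc n t i).image π ∈ G)).card
      ≤ Nat.choose n t * K * M := by
    calc ∑ π : Equiv.Perm (Fin n),
        (Finset.univ.filter (fun i : Fin n => (arc n t i).image π ∈ G)).card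
        ≤ ∑ _π : Equiv.Perm (Fin n), M := Finset.sum_le_sum (fun π _ => hcb π)
      _ = Nat.choose n t * K * M := by
        rw [Finset.sum_const, smul_eq_mul, htot]
  have hlb : ∑ i : Fin n,
      (Finset.univ.filter (fun π : Equiv.Perm (Fin n) => (arc n t i).image π ∈ G)).card
      = n * (G.card * K) := by
    rw [Finset.sum_congr rfl (fun i _ => hcol i), Finset.sum_const, smul_eq_mul,
      Finset.card_univ, Fintype.card_fin]
  have hK1 : 1 ≤ K := by
    rw [hK]
    apply Finset.card_pos.2
    exact ⟨1, by simp⟩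
  have hfinal : n * (G.card * K) ≤ Nat.choose n t * K * M := by
    rw [← hlb, ← hswap]
    exact hub
  have : n * G.card * K ≤ Nat.choose n t * M * K := by
    calc n * G.card * K = n * (G.card * K) := by ring
      _ ≤ Nat.choose n t * K * M := hfinal
      _ = Nat.choose n t * M * K := by ring
  exact Nat.le_of_mul_le_mul_right this (by omega)

lemma count_bound {n t lam s1 s2 χ c : ℕ} [NeZero n]
    (htn : t ≤ n) (hχ : 0 < χ) (hc : c = n / χ)
    (ht1 : t ≤ s1 * χ) (ht2 : n - t ≤ s2 * χ) (hχn : χ ≤ n)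
    (G : Finset (Finset (Fin n)))
    (hG2 : ¬ ∃ A : Fin lam → Finset (Fin n), (∀ i, A i ∈ G) ∧
      (∀ B : Finset (Fin lam), B.card = s1 + 1 → B.inf A = ∅) ∧
      (∀ B : Finset (Fin lam), B.card = s2 + 1 → B.sup A = Finset.univ))
    (π : Equiv.Perm (Fin n)) :
    (Finset.univ.filter (fun i : Fin n => (arc n t i).image π ∈ G)).card
      ≤ (lam - 1) * ((n + c - 1) / c) := by
  have hn : 0 < n := Nat.pos_of_ne_zero (NeZero.ne n)
  have hc1 : 0 < c := by rw [hc]; exact Nat.one_le_div_iff hχ |>.2 hχn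
  have hχc : χ ≤ n / c := by
    rw [Nat.le_div_iff_mul_le hc1, hc]
    exact Nat.mul_le_mul_left χ (le_refl _) |>.trans (by
      rw [mul_comm]; exact Nat.div_mul_le_self n χ)
  by_contra hcon
  push_neg at hcon
  set M := (n + c - 1) / c with hM
  set P := Finset.univ.filter (fun i : Fin n => (arc n t i).image π ∈ G) with hP
  have key : ∃ j ∈ Finset.range M, lam ≤ (P.filter (fun i => cls n c i.val = j)).card := by
    by_contra hk
    push_neg at hk
    have hfib := Finset.card_eq_sum_card_fiberwise
      (f := fun i : Fin n => cls n c i.val) (s := P) (t := Finset.range M)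
      (fun i _ => Finset.mem_range.2 (cls_lt hn hc1 i.val))
    rw [hfib] at hcon
    have hsum : ∑ j ∈ Finset.range M, (P.filter (fun i => cls n c i.val = j)).card
        ≤ ∑ j ∈ Finset.range M, (lam - 1) := by
      apply Finset.sum_le_sum
      intro j hj
      have := hk j hj
      omega
    rw [Finset.sum_const, Finset.card_range, smul_eq_mul, mul_comm] at hsum
    omega
  obtain ⟨j, hj, hcard⟩ := key
  obtain ⟨Z, hZsub, hZcard⟩ := Finset.exists_subset_card_eq hcard
  have e := Z.equivFinOfCardEq hZcard
  set x : Fin lam → Fin n := fun i => (e.symm i : Fin n) with hx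
  have hxZ : ∀ i, x i ∈ Z := fun i => (e.symm i).2
  have hxinj : Function.Injective x := fun i1 i2 h =>
    e.symm.injective (Subtype.ext h)
  have hxfib : ∀ i, x i ∈ P ∧ cls n c (x i).val = j := by
    intro i
    have := hZsub (hxZ i)
    simp only [Finset.mem_filter] at this
    exact ⟨this.1, this.2⟩
  have hsp : ∀ i1 i2 : Fin lam, i1 ≠ i2 →
      (χ ≤ if (x i1).val ≤ (x i2).val then (x i2).val - (x i1).val else (x i1).val - (x i2).val) ∧
      (if (x i1).val ≤ (x i2).val then (x i2).val - (x i1).val else (x i1).val - (x i2).val) + χ ≤ n := by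
    intro i1 i2 hne
    apply cls_spread hn hc1 hχc (x i1).isLt (x i2).isLt
    · intro h
      exact hne (hxinj (Fin.ext h))
    · rw [(hxfib i1).2, (hxfib i2).2]
  have hng := not_good htn hχ ht1 ht2 x hxinj hsp π
  apply hG2
  refine ⟨fun i => (arc n t (x i)).image π, ?_, hng.1, hng.2⟩
  intro i
  have := (hxfib i).1
  rw [hP, Finset.mem_filter] at this
  exact this.2

end Stmt13


/-- The generalized matching number `m(n,t,λ;k₁,k₂)`: the maximum size of a family of
`t`-subsets of `[n]` containing no (k₁,k₂)-disjoint collection of `λ` repeatable members. -/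
noncomputable def genMatch (n t lam k1 k2 : ℕ) : ℕ :=
  sSup {N | ∃ G : Finset (Finset (Fin n)),
    (∀ S ∈ G, S.card = t) ∧
    (¬ ∃ A : Fin lam → Finset (Fin n), (∀ i, A i ∈ G) ∧
      (∀ B : Finset (Fin lam), B.card = k1 → B.inf A = ∅) ∧
      (∀ B : Finset (Fin lam), B.card = k2 → B.sup A = Finset.univ)) ∧
    G.card = N}

/-- Let n > t > 1, min{s₁+1,s₂+1} ≤ λ ≤ s₁+s₂,
χ = max{⌈t/s₁⌉, ⌈(n-t)/s₂⌉}. Then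
m(n,t,λ;s₁+1,s₂+1) ≤ (1/n)·binom(n,t)·(λ-1)·⌈n/⌊n/χ⌋⌉. -/
theorem stmt13 (n t lam s1 s2 : ℕ) (hnt : t < n) (ht : 1 < t)
    (hl1 : 1 ≤ lam) (hs1 : 1 ≤ s1) (hs2 : 1 ≤ s2)
    (hlam1 : min (s1 + 1) (s2 + 1) ≤ lam) (hlam2 : lam ≤ s1 + s2) :
    (genMatch n t lam (s1 + 1) (s2 + 1) : ℝ) ≤
      (1 / (n : ℝ)) * (Nat.choose n t : ℝ) * ((lam - 1 : ℕ) : ℝ) *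
        (((n + n / max ((t + s1 - 1) / s1) ((n - t + s2 - 1) / s2) - 1) /
          (n / max ((t + s1 - 1) / s1) ((n - t + s2 - 1) / s2)) : ℕ) : ℝ) := by
  classical
  have hn : 0 < n := by omega
  haveI : NeZero n := ⟨by omega⟩
  set χ := max ((t + s1 - 1) / s1) ((n - t + s2 - 1) / s2) with hχdef
  set c := n / χ with hcdef
  set M := (n + c - 1) / c with hMdef
  have hχ1 : 0 < χ := lt_of_lt_of_le (Stmt13.one_le_ceilDiv (by omega) hs1) (le_max_left _ _)
  have hχn : χ ≤ n := max_le
    ((Stmt13.ceilDiv_le_self (by omega) hs1).trans (by omega))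
    ((Stmt13.ceilDiv_le_self (by omega : 0 < n - t) hs2).trans (by omega))
  have ht1 : t ≤ s1 * χ :=
    le_trans (Stmt13.le_mul_ceilDiv hs1) (Nat.mul_le_mul_left _ (le_max_left _ _))
  have ht2 : n - t ≤ s2 * χ :=
    le_trans (Stmt13.le_mul_ceilDiv hs2) (Nat.mul_le_mul_left _ (le_max_right _ _))
  have hmem : genMatch n t lam (s1 + 1) (s2 + 1) ∈
      {N | ∃ G : Finset (Finset (Fin n)),
        (∀ S ∈ G, S.card = t) ∧
        (¬ ∃ A : Fin lam → Finset (Fin n), (∀ i, A i ∈ G) ∧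
          (∀ B : Finset (Fin lam), B.card = s1 + 1 → B.inf A = ∅) ∧
          (∀ B : Finset (Fin lam), B.card = s2 + 1 → B.sup A = Finset.univ)) ∧
        G.card = N} := by
    apply Nat.sSup_mem
    · refine ⟨0, ∅, by simp, ?_, by simp⟩
      rintro ⟨A, hA, -, -⟩
      exact absurd (hA ⟨0, by omega⟩) (Finset.notMem_empty _)
    · refine ⟨(Finset.univ : Finset (Finset (Fin n))).card, ?_⟩
      rintro N ⟨G, -, -, rfl⟩
      exact Finset.card_le_univ G
  obtain ⟨G, hG1, hG2, hGcard⟩ := hmem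
  have hnat : n * genMatch n t lam (s1 + 1) (s2 + 1) ≤
      Nat.choose n t * ((lam - 1) * M) := by
    rw [← hGcard]
    exact Stmt13.main_count (le_of_lt hnt) G hG1
      (fun π => Stmt13.count_bound (le_of_lt hnt) hχ1 hcdef ht1 ht2 hχn G hG2 π)
  have hrw : (1 / (n : ℝ)) * (Nat.choose n t : ℝ) * ((lam - 1 : ℕ) : ℝ) * (M : ℝ)
      = ((Nat.choose n t * ((lam - 1) * M) : ℕ) : ℝ) / (n : ℝ) := by
    push_cast
    ring
  rw [hrw, le_div_iff₀ (by exact_mod_cast hn)]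
  have hnat' : genMatch n t lam (s1 + 1) (s2 + 1) * n ≤
      Nat.choose n t * ((lam - 1) * M) := by rw [mul_comm] at hnat; exact hnat
  calc (genMatch n t lam (s1 + 1) (s2 + 1) : ℝ) * (n : ℝ)
      = ((genMatch n t lam (s1 + 1) (s2 + 1) * n : ℕ) : ℝ) := by push_cast; ring
    _ ≤ ((Nat.choose n t * ((lam - 1) * M) : ℕ) : ℝ) := by
        exact_mod_cast hnat'
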